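/- Let n, j be natural numbers with j ≤ n, and let a, b, d be complex. Define Rₖ = a(k-1-n), Sₖ = d + k(b+k-1), Tₖ = (j-k)(k+1). Then the (n+1)×(n+1) tridiagonal matrix M with diagonal (S₀,...,Sₙ), subdiagonal (R₁,...,Rₙ), and superdiagonal (T₀,...,T_{n-1}) has the block lower-triangular form M = [[A, 0],[D, B]], where A is the leading (j+1)×(j+1) tridiagonal block and B is the trailing (n-j)×(n-j) tridiagonal block, and consequently det M = det A · det B. -/

import Mathlib

/-- Hautot's structural observation: when `c = j` the tridiagonal matrix of the linear
system for polynomial solutions of the confluent Heun equation is block lower-triangular,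
so its determinant factors as the product of the two diagonal block determinants. -/
theorem stmt_15 (n j : ℕ) (hj : j ≤ n) (a b d : ℂ) :
    let R : ℕ → ℂ := fun k => a * ((k : ℂ) - 1 - (n : ℂ))
    let S : ℕ → ℂ := fun k => d + (k : ℂ) * (b + (k : ℂ) - 1)
    let T : ℕ → ℂ := fun k => ((j : ℂ) - (k : ℂ)) * ((k : ℂ) + 1)
    let M : Matrix (Fin (n + 1)) (Fin (n + 1)) ℂ := fun i k =>
      if (i : ℕ) = (k : ℕ) then S i
      else if (i : ℕ) = (k : ℕ) + 1 then R i
      else if (i : ℕ) + 1 = (k : ℕ) then T i else 0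
    let A : Matrix (Fin (j + 1)) (Fin (j + 1)) ℂ := fun i k =>
      M ⟨(i : ℕ), by omega⟩ ⟨(k : ℕ), by omega⟩
    let B : Matrix (Fin (n - j)) (Fin (n - j)) ℂ := fun i k =>
      M ⟨j + 1 + (i : ℕ), by omega⟩ ⟨j + 1 + (k : ℕ), by omega⟩
    (∀ i k : Fin (n + 1), (i : ℕ) ≤ j → j < (k : ℕ) → M i k = 0) ∧
      M.det = A.det * B.det := by
  intro R S T M A B
  have hsum : j + 1 + (n - j) = n + 1 := by omega
  have hzero : ∀ i k : Fin (n + 1), (i : ℕ) ≤ j → j < (k : ℕ) → M i k = 0 := by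
    intro i k hi hk
    show (if (i : ℕ) = (k : ℕ) then S i
      else if (i : ℕ) = (k : ℕ) + 1 then R i
      else if (i : ℕ) + 1 = (k : ℕ) then T i else 0) = 0
    rcases Nat.lt_or_ge ((i : ℕ) + 1) (k : ℕ) with h | h
    · rw [if_neg (by omega), if_neg (by omega), if_neg (by omega)]
    · have hik : (i : ℕ) + 1 = (k : ℕ) := by omega
      have hij : (i : ℕ) = j := by omega
      rw [if_neg (by omega), if_neg (by omega), if_pos hik]
      show ((j : ℂ) - ((i : ℕ) : ℂ)) * _ = 0
      rw [hij, sub_self, zero_mul]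
  refine ⟨hzero, ?_⟩
  let e : Fin (j + 1) ⊕ Fin (n - j) ≃ Fin (n + 1) :=
    finSumFinEquiv.trans (finCongr hsum)
  have hinl : ∀ i : Fin (j + 1), ((e (Sum.inl i) : ℕ)) = (i : ℕ) := by
    intro i; simp [e]
  have hinr : ∀ i : Fin (n - j), ((e (Sum.inr i) : ℕ)) = j + 1 + (i : ℕ) := by
    intro i; simp [e]
  have key : M.submatrix e e =
      Matrix.fromBlocks A 0 (fun i k => M (e (Sum.inr i)) (e (Sum.inl k))) B := by
    ext i k
    rcases i with i | i <;> rcases k with k | k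
    · show M (e (Sum.inl i)) (e (Sum.inl k)) = A i k
      congr 1 <;> exact Fin.ext (by rw [hinl])
    · show M (e (Sum.inl i)) (e (Sum.inr k)) = 0
      exact hzero _ _ (by rw [hinl]; omega) (by rw [hinr]; omega)
    · rfl
    · show M (e (Sum.inr i)) (e (Sum.inr k)) = B i k
      congr 1 <;> exact Fin.ext (by rw [hinr])
  calc M.det = (M.submatrix e e).det := (Matrix.det_submatrix_equiv_self e M).symm
    _ = A.det * B.det := by rw [key]; apply Matrix.det_fromBlocks_zero₁₂
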